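/- The function α₁ is a strictly increasing, strictly concave C¹ function on (1,+∞), its derivative is given by α₁'(e) = 2√2 ∫₀^{π} (e + cos θ)^{-1/2} dθ, and α₁(e) ~ 4π√(2e), α₁'(e) ~ 2π√(2/e) as e → +∞. -/

import Mathlib

open Real Set Filter

noncomputable def theta1 (e : ℝ) : ℝ := Real.arccos (-e)

noncomputable def alpha1 (e : ℝ) : ℝ :=
  4 * Real.sqrt 2 * ∫ θ in (0:ℝ)..(theta1 e), Real.sqrt (e + Real.cos θ)

noncomputable def dalpha1 (e : ℝ) : ℝ :=
  2 * Real.sqrt 2 * ∫ θ in (0:ℝ)..(theta1 e), 1 / Real.sqrt (e + Real.cos θ)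

lemma theta1_eq {e : ℝ} (he : 1 < e) : theta1 e = π := by
  rw [theta1, Real.arccos_eq_pi]; linarith

lemma addcos_pos {e : ℝ} (he : 1 < e) (θ : ℝ) : 0 < e + Real.cos θ := by
  have := Real.neg_one_le_cos θ; linarith

lemma cont_sqrt (e : ℝ) : Continuous fun θ => Real.sqrt (e + Real.cos θ) :=
  (continuous_const.add Real.continuous_cos).sqrt

lemma cont_inv {e : ℝ} (he : 1 < e) :
    Continuous fun θ => 1 / Real.sqrt (e + Real.cos θ) :=
  continuous_const.div (cont_sqrt e) fun θ => (Real.sqrt_pos.2 (addcos_pos he θ)).ne'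

/-- The integral `J e = ∫₀^π 1/√(e+cos θ)`. -/
noncomputable def Jint (e : ℝ) : ℝ := ∫ θ in (0:ℝ)..π, 1 / Real.sqrt (e + Real.cos θ)

/-- The integral `I e = ∫₀^π √(e+cos θ)`. -/
noncomputable def Iint (e : ℝ) : ℝ := ∫ θ in (0:ℝ)..π, Real.sqrt (e + Real.cos θ)

lemma alpha1_eq {e : ℝ} (he : 1 < e) : alpha1 e = 4 * Real.sqrt 2 * Iint e := by
  rw [alpha1, theta1_eq he, Iint]

lemma dalpha1_eq {e : ℝ} (he : 1 < e) : dalpha1 e = 2 * Real.sqrt 2 * Jint e := by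
  rw [dalpha1, theta1_eq he, Jint]

lemma hasDerivAt_Iint {e : ℝ} (he : 1 < e) :
    HasDerivAt Iint (∫ θ in (0:ℝ)..π, 1 / (2 * Real.sqrt (e + Real.cos θ))) e := by
  have hε0 : 0 < (e - 1) / 2 := by linarith
  have key := intervalIntegral.hasDerivAt_integral_of_dominated_loc_of_deriv_le
      (μ := MeasureTheory.volume) (a := (0:ℝ)) (b := π)
      (F := fun x θ => Real.sqrt (x + Real.cos θ))
      (F' := fun x θ => 1 / (2 * Real.sqrt (x + Real.cos θ)))
      (x₀ := e) (bound := fun _ => 1 / (2 * Real.sqrt ((e - 1) / 2))) (Metric.ball_mem_nhds e hε0)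
      ?_ ?_ ?_ ?_ ?_ ?_
  · exact key.2
  · exact Eventually.of_forall fun x => (cont_sqrt x).aestronglyMeasurable
  · exact ((cont_sqrt e).intervalIntegrable 0 π)
  · exact (continuous_const.div (continuous_const.mul (cont_sqrt e))
      fun θ => by
        have := Real.sqrt_pos.2 (addcos_pos he θ); exact (mul_pos two_pos this).ne').aestronglyMeasurable
  · refine Eventually.of_forall fun θ _ x hx => ?_
    have hx' : e - (e - 1) / 2 < x := by
      have := abs_lt.1 (Metric.mem_ball.1 hx); linarith [this.1]
    have h1 : (e - 1) / 2 ≤ x + Real.cos θ := by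
      have := Real.neg_one_le_cos θ; linarith
    have h2 : Real.sqrt ((e - 1) / 2) ≤ Real.sqrt (x + Real.cos θ) :=
      Real.sqrt_le_sqrt h1
    have h3 : 0 < Real.sqrt ((e - 1) / 2) := Real.sqrt_pos.2 hε0
    rw [Real.norm_eq_abs, abs_of_nonneg (by positivity)]
    apply one_div_le_one_div_of_le (by positivity)
    linarith
  · exact intervalIntegrable_const
  · refine Eventually.of_forall fun θ _ x hx => ?_
    have hx' : e - (e - 1) / 2 < x := by
      have := abs_lt.1 (Metric.mem_ball.1 hx); linarith [this.1]
    have h1 : 0 < x + Real.cos θ := by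
      have := Real.neg_one_le_cos θ; linarith
    have h := (Real.hasDerivAt_sqrt h1.ne').comp x
      ((hasDerivAt_id x).add_const (Real.cos θ))
    simpa [Function.comp_def] using h

lemma hasDerivAt_alpha1 {e : ℝ} (he : 1 < e) :
    HasDerivAt alpha1 (2 * Real.sqrt 2 * Jint e) e := by
  have h1 := (hasDerivAt_Iint he).const_mul (4 * Real.sqrt 2)
  have heq : (fun x => 4 * Real.sqrt 2 * Iint x) =ᶠ[nhds e] alpha1 := by
    filter_upwards [Ioi_mem_nhds he] with x hx
    exact (alpha1_eq hx).symm
  have hval : 4 * Real.sqrt 2 * ∫ θ in (0:ℝ)..π, 1 / (2 * Real.sqrt (e + Real.cos θ))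
      = 2 * Real.sqrt 2 * Jint e := by
    have : ∀ θ : ℝ, 1 / (2 * Real.sqrt (e + Real.cos θ))
        = (1/2) * (1 / Real.sqrt (e + Real.cos θ)) := fun θ => by ring
    rw [Jint]
    rw [intervalIntegral.integral_congr (g := fun θ =>
      (1/2) * (1 / Real.sqrt (e + Real.cos θ))) fun θ _ => this θ]
    rw [intervalIntegral.integral_const_mul]
    ring
  rw [hval] at h1
  exact h1.congr_of_eventuallyEq heq.symm

lemma Jint_pos {e : ℝ} (he : 1 < e) : 0 < Jint e :=
  intervalIntegral.intervalIntegral_pos_of_pos_on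
    ((cont_inv he).intervalIntegrable 0 π)
    (fun θ _ => by
      have := addcos_pos he θ
      positivity)
    Real.pi_pos

lemma Jint_anti : StrictAntiOn Jint (Set.Ioi (1:ℝ)) := by
  intro x hx y hy hxy
  simp only [Set.mem_Ioi] at hx hy
  have hsub : 0 < ∫ θ in (0:ℝ)..π,
      (1 / Real.sqrt (x + Real.cos θ) - 1 / Real.sqrt (y + Real.cos θ)) := by
    apply intervalIntegral.intervalIntegral_pos_of_pos_on
      (((cont_inv hx).sub (cont_inv hy)).intervalIntegrable 0 π) ?_ Real.pi_pos
    intro θ _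
    have h1 : 0 < x + Real.cos θ := addcos_pos hx θ
    have h2 : Real.sqrt (x + Real.cos θ) < Real.sqrt (y + Real.cos θ) :=
      Real.sqrt_lt_sqrt h1.le (by linarith)
    have h3 : 0 < Real.sqrt (x + Real.cos θ) := Real.sqrt_pos.2 h1
    have := one_div_lt_one_div_of_lt h3 h2
    simp only [Pi.sub_apply]
    linarith
  rw [intervalIntegral.integral_sub ((cont_inv hx).intervalIntegrable 0 π)
    ((cont_inv hy).intervalIntegrable 0 π)] at hsub
  have : Jint y < Jint x := by rw [Jint, Jint]; linarith
  exact this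

lemma contOn_Jint : ContinuousOn Jint (Set.Ioi (1:ℝ)) := by
  intro e he
  simp only [Set.mem_Ioi] at he
  apply ContinuousAt.continuousWithinAt
  set m : ℝ := (1 + e) / 2 with hm
  have hm1 : 1 < m := by rw [hm]; linarith
  have hme : m < e := by rw [hm]; linarith
  apply intervalIntegral.continuousAt_of_dominated_interval
    (bound := fun _ => 1 / Real.sqrt (m - 1))
  · exact Eventually.of_forall fun x =>
      (measurable_const.div ((continuous_const.add Real.continuous_cos).sqrt.comp
        continuous_id).measurable).aestronglyMeasurable
  · filter_upwards [Ioi_mem_nhds hme] with x hx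
    refine MeasureTheory.ae_of_all _ fun θ _ => ?_
    simp only [Set.mem_Ioi] at hx
    have h1 : m - 1 ≤ x + Real.cos θ := by
      have := Real.neg_one_le_cos θ; linarith
    have h2 : Real.sqrt (m - 1) ≤ Real.sqrt (x + Real.cos θ) := Real.sqrt_le_sqrt h1
    have h3 : 0 < Real.sqrt (m - 1) := Real.sqrt_pos.2 (by linarith)
    rw [Real.norm_eq_abs, abs_of_nonneg (by positivity)]
    apply one_div_le_one_div_of_le (by positivity)
    linarith
  · exact intervalIntegrable_const
  · refine MeasureTheory.ae_of_all _ fun θ _ => ?_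
    have h1 : 0 < e + Real.cos θ := addcos_pos he θ
    exact (continuousAt_const.div
      (((continuous_id.add continuous_const).sqrt).continuousAt)
      (Real.sqrt_pos.2 h1).ne')

lemma contOn_alpha1 : ContinuousOn alpha1 (Set.Ioi (1:ℝ)) := fun e he =>
  ((hasDerivAt_alpha1 he).differentiableAt.continuousAt).continuousWithinAt

lemma deriv_alpha1 {e : ℝ} (he : 1 < e) :
    deriv alpha1 e = 2 * Real.sqrt 2 * Jint e := (hasDerivAt_alpha1 he).deriv

lemma sqrt2_pos : (0:ℝ) < Real.sqrt 2 := Real.sqrt_pos.2 (by norm_num)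

lemma Iint_bounds {e : ℝ} (he : 1 < e) :
    π * Real.sqrt (e - 1) ≤ Iint e ∧ Iint e ≤ π * Real.sqrt (e + 1) := by
  constructor
  · have := intervalIntegral.integral_mono_on (μ := MeasureTheory.volume)
      (f := fun _ => Real.sqrt (e - 1)) (g := fun θ => Real.sqrt (e + Real.cos θ))
      Real.pi_pos.le intervalIntegrable_const ((cont_sqrt e).intervalIntegrable 0 π)
      (fun θ _ => Real.sqrt_le_sqrt (by have := Real.neg_one_le_cos θ; linarith))
    simpa [Iint, smul_eq_mul] using this
  · have := intervalIntegral.integral_mono_on (μ := MeasureTheory.volume)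
      (f := fun θ => Real.sqrt (e + Real.cos θ)) (g := fun _ => Real.sqrt (e + 1))
      Real.pi_pos.le ((cont_sqrt e).intervalIntegrable 0 π) intervalIntegrable_const
      (fun θ _ => Real.sqrt_le_sqrt (by have := Real.cos_le_one θ; linarith))
    simpa [Iint, smul_eq_mul] using this

lemma Jint_bounds {e : ℝ} (he : 1 < e) :
    π * (1 / Real.sqrt (e + 1)) ≤ Jint e ∧ Jint e ≤ π * (1 / Real.sqrt (e - 1)) := by
  constructor
  · have := intervalIntegral.integral_mono_on (μ := MeasureTheory.volume)
      (f := fun _ => 1 / Real.sqrt (e + 1)) (g := fun θ => 1 / Real.sqrt (e + Real.cos θ))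
      Real.pi_pos.le intervalIntegrable_const ((cont_inv he).intervalIntegrable 0 π)
      (fun θ _ => by
        have h1 : 0 < e + Real.cos θ := addcos_pos he θ
        apply one_div_le_one_div_of_le (Real.sqrt_pos.2 h1)
        exact Real.sqrt_le_sqrt (by have := Real.cos_le_one θ; linarith))
    simpa [Jint, smul_eq_mul] using this
  · have := intervalIntegral.integral_mono_on (μ := MeasureTheory.volume)
      (f := fun θ => 1 / Real.sqrt (e + Real.cos θ)) (g := fun _ => 1 / Real.sqrt (e - 1))
      Real.pi_pos.le ((cont_inv he).intervalIntegrable 0 π) intervalIntegrable_const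
      (fun θ _ => by
        have h3 : 0 < Real.sqrt (e - 1) := Real.sqrt_pos.2 (by linarith)
        apply one_div_le_one_div_of_le h3
        exact Real.sqrt_le_sqrt (by have := Real.neg_one_le_cos θ; linarith))
    simpa [Jint, smul_eq_mul] using this

lemma tendsto_sqrt_ratio (a b : ℝ) :
    Tendsto (fun e : ℝ => Real.sqrt ((e + a) / (e + b))) atTop (nhds 1) := by
  have h0 : Tendsto (fun e : ℝ => (e + a) / (e + b)) atTop (nhds 1) := by
    have h1 : Tendsto (fun e : ℝ => 1 + (a - b) / (e + b)) atTop (nhds 1) := by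
      have h2 : Tendsto (fun e : ℝ => (e + b)⁻¹) atTop (nhds 0) :=
        tendsto_inv_atTop_zero.comp (tendsto_atTop_add_const_right atTop b tendsto_id)
      have h3 : Tendsto (fun e : ℝ => 1 + (a - b) * (e + b)⁻¹) atTop
          (nhds (1 + (a - b) * 0)) :=
        tendsto_const_nhds.add (h2.const_mul (a - b))
      simpa [div_eq_mul_inv, mul_comm] using h3
    apply h1.congr'
    filter_upwards [eventually_gt_atTop (-b)] with e heb
    have hne : e + b ≠ 0 := ne_of_gt (by linarith)
    field_simp
    ring
  have := (Real.continuous_sqrt.tendsto 1).comp h0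
  simpa [Real.sqrt_one, Function.comp_def] using this

/-- α₁ is strictly increasing, strictly concave and C¹ on (1,∞), its
derivative is 2√2 ∫₀^π (e + cos θ)^{-1/2} dθ there, and α₁(e) ~ 4π√(2e),
α₁'(e) ~ 2π√(2/e) as e → +∞. -/
theorem alpha1_concave_right :
    StrictMonoOn alpha1 (Set.Ioi (1:ℝ)) ∧
    StrictConcaveOn ℝ (Set.Ioi (1:ℝ)) alpha1 ∧
    ContDiffOn ℝ 1 alpha1 (Set.Ioi (1:ℝ)) ∧
    (∀ e ∈ Set.Ioi (1:ℝ), HasDerivAt alpha1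
        (2 * Real.sqrt 2 * ∫ θ in (0:ℝ)..π, 1 / Real.sqrt (e + Real.cos θ)) e) ∧
    Tendsto (fun e => alpha1 e / (4 * π * Real.sqrt (2 * e))) atTop (nhds 1) ∧
    Tendsto (fun e => dalpha1 e / (2 * π * Real.sqrt (2 / e))) atTop (nhds 1) := by
  refine ⟨?_, ?_, ?_, ?_, ?_, ?_⟩
  · -- strict mono
    apply strictMonoOn_of_deriv_pos (convex_Ioi 1) contOn_alpha1
    intro x hx
    rw [interior_Ioi] at hx
    rw [deriv_alpha1 hx]
    have := Jint_pos hx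
    have := sqrt2_pos
    positivity
  · -- strict concave
    apply StrictAntiOn.strictConcaveOn_of_deriv (convex_Ioi 1) contOn_alpha1
    rw [interior_Ioi]
    intro x hx y hy hxy
    rw [deriv_alpha1 hx, deriv_alpha1 hy]
    have h2 : (0:ℝ) < 2 * Real.sqrt 2 := by have := sqrt2_pos; linarith
    exact mul_lt_mul_of_pos_left (Jint_anti hx hy hxy) h2
  · -- C¹
    have h1 : (1 : WithTop ℕ∞) = 0 + 1 := by norm_num
    rw [h1, contDiffOn_succ_iff_deriv_of_isOpen isOpen_Ioi]
    refine ⟨fun e he => (hasDerivAt_alpha1 he).differentiableAt.differentiableWithinAt,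
      by simp, ?_⟩
    rw [contDiffOn_zero]
    exact ContinuousOn.congr (continuousOn_const.mul contOn_Jint)
      fun e he => deriv_alpha1 he
  · -- derivative formula
    intro e he
    exact hasDerivAt_alpha1 he
  · -- asymptotics of alpha1
    apply tendsto_of_tendsto_of_tendsto_of_le_of_le' (tendsto_sqrt_ratio (-1) 0)
      (tendsto_sqrt_ratio 1 0)
    · filter_upwards [eventually_gt_atTop (1:ℝ)] with e he
      have he0 : (0:ℝ) < e := by linarith
      have hD : 0 < 4 * π * Real.sqrt (2 * e) := by
        have := Real.pi_pos
        have : 0 < Real.sqrt (2 * e) := Real.sqrt_pos.2 (by linarith)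
        positivity
      have hnum : 4 * Real.sqrt 2 * (π * Real.sqrt (e - 1)) ≤ alpha1 e := by
        rw [alpha1_eq he]
        have := (Iint_bounds he).1
        have h4 : (0:ℝ) ≤ 4 * Real.sqrt 2 := by positivity
        nlinarith
      have heq : Real.sqrt ((e + (-1)) / (e + 0))
          = 4 * Real.sqrt 2 * (π * Real.sqrt (e - 1)) / (4 * π * Real.sqrt (2 * e)) := by
        rw [show e + (-1) = e - 1 by ring, show e + 0 = e by ring]
        rw [Real.sqrt_div (by linarith : (0:ℝ) ≤ e - 1) e,
          Real.sqrt_mul (by norm_num : (0:ℝ) ≤ 2) e]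
        have hs2 := sqrt2_pos
        have hse : 0 < Real.sqrt e := Real.sqrt_pos.2 he0
        have hπ := Real.pi_pos
        field_simp
      rw [heq]
      exact div_le_div_of_nonneg_right hnum hD.le
    · filter_upwards [eventually_gt_atTop (1:ℝ)] with e he
      have he0 : (0:ℝ) < e := by linarith
      have hD : 0 < 4 * π * Real.sqrt (2 * e) := by
        have := Real.pi_pos
        have : 0 < Real.sqrt (2 * e) := Real.sqrt_pos.2 (by linarith)
        positivity
      have hnum : alpha1 e ≤ 4 * Real.sqrt 2 * (π * Real.sqrt (e + 1)) := by
        rw [alpha1_eq he]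
        have := (Iint_bounds he).2
        have h4 : (0:ℝ) ≤ 4 * Real.sqrt 2 := by positivity
        nlinarith
      have heq : Real.sqrt ((e + 1) / (e + 0))
          = 4 * Real.sqrt 2 * (π * Real.sqrt (e + 1)) / (4 * π * Real.sqrt (2 * e)) := by
        rw [show e + 0 = e by ring]
        rw [Real.sqrt_div (by linarith : (0:ℝ) ≤ e + 1) e,
          Real.sqrt_mul (by norm_num : (0:ℝ) ≤ 2) e]
        have hs2 := sqrt2_pos
        have hse : 0 < Real.sqrt e := Real.sqrt_pos.2 he0
        have hπ := Real.pi_pos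
        field_simp
      rw [heq]
      exact div_le_div_of_nonneg_right hnum hD.le
  · -- asymptotics of dalpha1
    apply tendsto_of_tendsto_of_tendsto_of_le_of_le' (tendsto_sqrt_ratio 0 1)
      (tendsto_sqrt_ratio 0 (-1))
    · filter_upwards [eventually_gt_atTop (1:ℝ)] with e he
      have he0 : (0:ℝ) < e := by linarith
      have hs : 0 < Real.sqrt (2 / e) := Real.sqrt_pos.2 (by positivity)
      have hD : 0 < 2 * π * Real.sqrt (2 / e) := by
        have := Real.pi_pos; positivity
      have hnum : 2 * Real.sqrt 2 * (π * (1 / Real.sqrt (e + 1))) ≤ dalpha1 e := by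
        rw [dalpha1_eq he]
        have := (Jint_bounds he).1
        have h4 : (0:ℝ) ≤ 2 * Real.sqrt 2 := by positivity
        nlinarith
      have heq : Real.sqrt ((e + 0) / (e + 1))
          = 2 * Real.sqrt 2 * (π * (1 / Real.sqrt (e + 1))) / (2 * π * Real.sqrt (2 / e)) := by
        rw [show e + 0 = e by ring]
        rw [Real.sqrt_div he0.le (e + 1),
          Real.sqrt_div (by norm_num : (0:ℝ) ≤ 2) e]
        have hs2 := sqrt2_pos
        have hse : 0 < Real.sqrt e := Real.sqrt_pos.2 he0
        have hse1 : 0 < Real.sqrt (e + 1) := Real.sqrt_pos.2 (by linarith)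
        have hπ := Real.pi_pos
        field_simp
      rw [heq]
      exact div_le_div_of_nonneg_right hnum hD.le
    · filter_upwards [eventually_gt_atTop (1:ℝ)] with e he
      have he0 : (0:ℝ) < e := by linarith
      have hs : 0 < Real.sqrt (2 / e) := Real.sqrt_pos.2 (by positivity)
      have hD : 0 < 2 * π * Real.sqrt (2 / e) := by
        have := Real.pi_pos; positivity
      have hnum : dalpha1 e ≤ 2 * Real.sqrt 2 * (π * (1 / Real.sqrt (e - 1))) := by
        rw [dalpha1_eq he]
        have := (Jint_bounds he).2
        have h4 : (0:ℝ) ≤ 2 * Real.sqrt 2 := by positivity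
        nlinarith
      have heq : Real.sqrt ((e + 0) / (e + (-1)))
          = 2 * Real.sqrt 2 * (π * (1 / Real.sqrt (e - 1))) / (2 * π * Real.sqrt (2 / e)) := by
        rw [show e + 0 = e by ring, show e + (-1) = e - 1 by ring]
        rw [Real.sqrt_div he0.le (e - 1),
          Real.sqrt_div (by norm_num : (0:ℝ) ≤ 2) e]
        have hs2 := sqrt2_pos
        have hse : 0 < Real.sqrt e := Real.sqrt_pos.2 he0
        have hse1 : 0 < Real.sqrt (e - 1) := Real.sqrt_pos.2 (by linarith)
        have hπ := Real.pi_pos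
        field_simp
      rw [heq]
      exact div_le_div_of_nonneg_right hnum hD.le
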